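/- Double robustness of modified G-estimation, treatment-free half: Let H* : Ω → ℝ^m be measurable, A* a treatment indicator, and Y integrable. Suppose there are a Borel function ν* : ℝ^m → ℝ with ν*(H*) integrable, a bounded Borel function C* : ℝ^m → ℝ, and a bounded σ(H*, A*)-measurable random variable Π such that E[Y | σ(H*, A*)] = ν*(H*) + Π·C*(H*) μ-a.e. Then taking θ = −ν* (the correctly specified observed-data treatment-free model), for EVERY bounded Borel function p̃ : ℝ^m → ℝ (whether or not it equals P(A* = 1 | σ(H*))) and every bounded Borel λ : ℝ^m → ℝ, E[ λ(H*)·(A* − p̃(H*))·(Y − Π·C*(H*) − ν*(H*)) ] = 0. -/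

import Mathlib

open MeasureTheory

/-- Double robustness of modified G-estimation, treatment-free half: with the
correctly specified observed-data treatment-free model `θ = -ν*`, the modified
G-estimating function is unbiased for every posited model `p̃` of
`P(A* = 1 | σ(H*))`. -/
theorem modified_G_estimation_doubly_robust_treatment_free
    {Ω : Type*} [MeasurableSpace Ω] (μ : Measure Ω) [IsProbabilityMeasure μ]
    {m : ℕ} (Hstar : Ω → (Fin m → ℝ)) (hHstar : Measurable Hstar)
    (Astar : Ω → ℝ) (hAstar : Measurable Astar)
    (hAstar01 : ∀ ω, Astar ω = 0 ∨ Astar ω = 1)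
    (Y : Ω → ℝ) (hY : Integrable Y μ)
    (νstar Cstar : (Fin m → ℝ) → ℝ) (hνstar : Measurable νstar) (hCstar : Measurable Cstar)
    (hνstarint : Integrable (fun ω => νstar (Hstar ω)) μ)
    (hCstarbdd : ∃ M, ∀ x, |Cstar x| ≤ M)
    (Pi : Ω → ℝ)
    (hPi : Measurable[MeasurableSpace.comap (fun ω => (Hstar ω, Astar ω)) inferInstance] Pi)
    (hPibdd : ∃ M, ∀ ω, |Pi ω| ≤ M)
    (hblip : μ[Y | MeasurableSpace.comap (fun ω => (Hstar ω, Astar ω)) inferInstance]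
      =ᵐ[μ] fun ω => νstar (Hstar ω) + Pi ω * Cstar (Hstar ω)) :
    ∀ ptilde lam : (Fin m → ℝ) → ℝ, Measurable ptilde → Measurable lam →
      (∃ M, ∀ x, |ptilde x| ≤ M) → (∃ M, ∀ x, |lam x| ≤ M) →
      ∫ ω, lam (Hstar ω) * (Astar ω - ptilde (Hstar ω))
          * (Y ω - Pi ω * Cstar (Hstar ω) - νstar (Hstar ω)) ∂μ = 0 := by
  intro ptilde lam hpt hlam hptbdd hlambdd
  letI mΩ : MeasurableSpace Ω := ‹_›
  set G := MeasurableSpace.comap (fun ω => (Hstar ω, Astar ω)) inferInstance with hGdef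
  have hG := (hHstar.prodMk hAstar).comap_le
  have hmap : Measurable[G] fun ω => (Hstar ω, Astar ω) := comap_measurable _
  have hHG : Measurable[G] Hstar := measurable_fst.comp hmap
  have hAG : Measurable[G] Astar := measurable_snd.comp hmap
  set g := fun ω => lam (Hstar ω) * (Astar ω - ptilde (Hstar ω)) with hgdef
  have hgG : StronglyMeasurable[G] g :=
    ((hlam.comp hHG).mul (hAG.sub (hpt.comp hHG))).stronglyMeasurable
  have hgmeas : Measurable[mΩ] g := hgG.measurable.mono hG le_rfl
  obtain ⟨Ml, hMl⟩ := hlambdd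
  obtain ⟨Mp, hMp⟩ := hptbdd
  have hgbdd : ∃ C, ∀ ω, ‖g ω‖ ≤ C := by
    refine ⟨Ml * (1 + Mp), fun ω => ?_⟩
    have hA : |Astar ω| ≤ 1 := by rcases hAstar01 ω with h | h <;> simp [h]
    have h1 : |Astar ω - ptilde (Hstar ω)| ≤ 1 + Mp :=
      (abs_sub _ _).trans (add_le_add hA (hMp _))
    calc ‖g ω‖ = |lam (Hstar ω)| * |Astar ω - ptilde (Hstar ω)| := abs_mul _ _
    _ ≤ Ml * (1 + Mp) :=
      mul_le_mul (hMl _) h1 (abs_nonneg _) ((abs_nonneg (lam (Hstar ω))).trans (hMl _))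
  have hgY : Integrable (fun ω => g ω * Y ω) μ :=
    hY.bdd_mul hgmeas.aestronglyMeasurable (ae_of_all _ hgbdd.choose_spec)
  have hce : Integrable (μ[Y | G]) μ := integrable_condExp
  have hgce : Integrable (fun ω => g ω * (μ[Y | G]) ω) μ :=
    hce.bdd_mul hgmeas.aestronglyMeasurable (ae_of_all _ hgbdd.choose_spec)
  have hpull : μ[fun ω => g ω * Y ω | G] =ᵐ[μ] fun ω => g ω * (μ[Y | G]) ω :=
    condExp_mul_of_stronglyMeasurable_left hgG hgY hY
  have key : ∫ ω, g ω * (μ[Y | G]) ω ∂μ = ∫ ω, g ω * Y ω ∂μ := by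
    rw [← integral_congr_ae hpull, integral_condExp hG]
  have heq : (fun ω => lam (Hstar ω) * (Astar ω - ptilde (Hstar ω))
        * (Y ω - Pi ω * Cstar (Hstar ω) - νstar (Hstar ω)))
      =ᵐ[μ] fun ω => g ω * Y ω - g ω * (μ[Y | G]) ω := by
    filter_upwards [hblip] with ω hω
    simp only [hgdef]
    rw [hω]
    ring
  rw [integral_congr_ae heq, integral_sub hgY hgce, key, sub_self]
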